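/- Let λ > 0 and let ε : [0,∞) → ℝ be continuous with ε(t) → 0 as t → ∞. Let h : [0,∞) → ℝ be a C¹ solution of h' + h² = λ² + ε defined for all t ≥ 0. Then for every δ > 0 there exists T > 0 such that for all t > T, either |h(t) − λ| < δ or |h(t) + λ| < δ. -/

import Mathlib

open Real Filter


private lemma barrier_le {h h' : ℝ → ℝ} {a s : ℝ}
    (hd : ∀ u ∈ Set.Ici s, HasDerivAt h (h' u) u)
    (hb : ∀ u ∈ Set.Ici s, h u = a → h' u < 0)
    (hs : h s ≤ a) : ∀ t ∈ Set.Ici s, h t ≤ a := by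
  intro t ht
  by_contra hta
  push_neg at hta
  have hst : s ≤ t := ht
  have hcont : ContinuousOn h (Set.Icc s t) := fun u hu =>
    ((hd u hu.1).continuousAt).continuousWithinAt
  have hSclosed : IsClosed (Set.Icc s t ∩ h ⁻¹' Set.Iic a) :=
    hcont.preimage_isClosed_of_isClosed isClosed_Icc isClosed_Iic
  have hSne : (Set.Icc s t ∩ h ⁻¹' Set.Iic a).Nonempty := ⟨s, ⟨le_refl s, hst⟩, hs⟩
  have hScpt : IsCompact (Set.Icc s t ∩ h ⁻¹' Set.Iic a) :=
    isCompact_Icc.of_isClosed_subset hSclosed Set.inter_subset_left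
  have hmS : sSup (Set.Icc s t ∩ h ⁻¹' Set.Iic a) ∈ Set.Icc s t ∩ h ⁻¹' Set.Iic a :=
    hScpt.sSup_mem hSne
  set m := sSup (Set.Icc s t ∩ h ⁻¹' Set.Iic a) with hm
  have hma : h m ≤ a := hmS.2
  have hmt : m < t := by
    rcases lt_or_eq_of_le hmS.1.2 with hlt | heq
    · exact hlt
    · exfalso; rw [heq] at hma; exact absurd hma (not_le.mpr hta)
  have hms : s ≤ m := hmS.1.1
  have hgt : ∀ u ∈ Set.Ioc m t, a < h u := by
    intro u hu
    by_contra hua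
    push_neg at hua
    exact absurd (le_csSup hScpt.bddAbove ⟨⟨hms.trans hu.1.le, hu.2⟩, hua⟩)
      (not_le.mpr hu.1)
  have hma' : h m = a := by
    refine le_antisymm hma (ge_of_tendsto
      (((hd m hms).continuousAt).continuousWithinAt.tendsto (s := Set.Ioi m)) ?_)
    filter_upwards [Ioc_mem_nhdsGT_of_mem ⟨le_refl m, hmt⟩] with u hu
    exact (hgt u hu).le
  have hder : h' m < 0 := hb m hms hma'
  have hslope : Tendsto (slope h m) (nhdsWithin m {m}ᶜ) (nhds (h' m)) :=
    hasDerivAt_iff_tendsto_slope.mp (hd m hms)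
  have hev : ∀ᶠ u in nhdsWithin m {m}ᶜ, slope h m u < 0 :=
    hslope.eventually_lt_const hder
  have hev' : ∀ᶠ u in nhdsWithin m (Set.Ioi m), slope h m u < 0 :=
    hev.filter_mono (nhdsWithin_mono m (fun u hu => ne_of_gt hu))
  obtain ⟨u, hu1, hu2⟩ := (hev'.and (Ioc_mem_nhdsGT_of_mem ⟨le_refl m, hmt⟩)).exists
  have hum : 0 < u - m := sub_pos.mpr hu2.1
  rw [slope_def_field] at hu1
  have : h u - h m < 0 := by
    have := (div_neg_iff.mp hu1)
    rcases this with ⟨h1, h2⟩ | ⟨h1, h2⟩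
    · linarith
    · linarith
  have : h u < a := by rw [← hma']; linarith
  exact absurd (hgt u hu2) (not_lt.mpr this.le)

private lemma barrier_ge {h h' : ℝ → ℝ} {a s : ℝ}
    (hd : ∀ u ∈ Set.Ici s, HasDerivAt h (h' u) u)
    (hb : ∀ u ∈ Set.Ici s, h u = a → 0 < h' u)
    (hs : a ≤ h s) : ∀ t ∈ Set.Ici s, a ≤ h t := by
  intro t ht
  have := barrier_le (h := fun u => -h u) (h' := fun u => -h' u) (a := -a) (s := s)
    (fun u hu => (hd u hu).neg)
    (fun u hu hua => by
      have h1 : h u = a := by linarith [neg_injective hua]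
      simpa using (hb u hu h1))
    (by simpa using hs) t ht
  simpa using this

private lemma lin_le {h h' : ℝ → ℝ} {c s t : ℝ} (hst : s ≤ t)
    (hd : ∀ u ∈ Set.Icc s t, HasDerivAt h (h' u) u)
    (hb : ∀ u ∈ Set.Icc s t, h' u ≤ -c) :
    h t ≤ h s - c * (t - s) := by
  have key : AntitoneOn (fun u => h u + c * u) (Set.Icc s t) := by
    have hder : ∀ u ∈ Set.Icc s t, HasDerivAt (fun y => h y + c * y) (h' u + c) u := by
      intro u hu
      exact ((hd u hu).add ((hasDerivAt_id u).const_mul c)).congr_deriv (by simp)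
    refine antitoneOn_of_deriv_nonpos (convex_Icc s t)
      (fun u hu => (hder u hu).continuousAt.continuousWithinAt)
      (fun u hu => ((hder u (interior_subset hu)).differentiableAt).differentiableWithinAt) ?_
    intro u hu
    rw [(hder u (interior_subset hu)).deriv]
    linarith [hb u (interior_subset hu)]
  have := key (Set.left_mem_Icc.mpr hst) (Set.right_mem_Icc.mpr hst) hst
  simp only at this
  linarith

private lemma lin_ge {h h' : ℝ → ℝ} {c s t : ℝ} (hst : s ≤ t)
    (hd : ∀ u ∈ Set.Icc s t, HasDerivAt h (h' u) u)
    (hb : ∀ u ∈ Set.Icc s t, c ≤ h' u) :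
    h s + c * (t - s) ≤ h t := by
  have := lin_le (h := fun u => -h u) (h' := fun u => -h' u) (c := c) hst
    (fun u hu => (hd u hu).neg)
    (fun u hu => by simpa using hb u hu)
  linarith

set_option maxHeartbeats 1000000


theorem riccati_approaches_pm_lambda (lam : ℝ) (hlam : 0 < lam) (eps h : ℝ → ℝ)
    (heps_cont : ContinuousOn eps (Set.Ici 0))
    (heps : Tendsto eps atTop (nhds 0))
    (hode : ∀ t ∈ Set.Ici (0:ℝ), HasDerivAt h (lam ^ 2 + eps t - h t ^ 2) t) :
    ∀ δ > (0:ℝ), ∃ T > (0:ℝ), ∀ t > T, |h t - lam| < δ ∨ |h t + lam| < δ := by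
  intro δ hδ
  set d : ℝ := min δ lam / 2 with hd_def
  have hd0 : 0 < d := by have := lt_min hδ hlam; positivity
  have hdδ : d ≤ δ / 2 := by
    have := min_le_left δ lam; rw [hd_def]; linarith
  have hdlam : d ≤ lam / 2 := by
    have := min_le_right δ lam; rw [hd_def]; linarith
  set c : ℝ := lam * d / 2 with hc_def
  have hc0 : 0 < c := by positivity
  -- choose T₀
  obtain ⟨T₀', hT₀'⟩ := eventually_atTop.mp
    ((NormedAddCommGroup.tendsto_nhds_zero.mp heps) c hc0)
  set T₀ : ℝ := max T₀' 1 with hT0_def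
  have hT₀1 : (1:ℝ) ≤ T₀ := le_max_right _ _
  have hepsT : ∀ u, T₀ ≤ u → -c < eps u ∧ eps u < c := by
    intro u hu
    have := hT₀' u (le_trans (le_max_left _ _) hu)
    rw [Real.norm_eq_abs] at this
    exact abs_lt.mp (by simpa using this)
  -- derivative available above any s ≥ 1
  have hD : ∀ s, 1 ≤ s → ∀ u ∈ Set.Ici s, HasDerivAt h (lam ^ 2 + eps u - h u ^ 2) u :=
    fun s hs u hu => hode u (by simp only [Set.mem_Ici] at hu ⊢; linarith)
  set M : ℝ := 2 * lam + 1 with hM_def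
  -- Step 1 : h stays above -lam - d/2 after T₀
  have step1 : ∀ t, T₀ ≤ t → -lam - d / 2 < h t := by
    intro t₁ ht₁
    by_contra hcon
    push_neg at hcon
    -- barrier at -lam - d/2
    have hstay1 : ∀ u ∈ Set.Ici t₁, h u ≤ -lam - d / 2 := by
      refine barrier_le (hD t₁ (hT₀1.trans ht₁)) ?_ hcon
      intro u hu hua
      have he := hepsT u (ht₁.trans hu)
      rw [hua]
      nlinarith [he.1, he.2]
    -- go down to -M
    set t₂ : ℝ := t₁ + max 0 ((h t₁ + M + 1) / c) with ht₂_def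
    have ht₂t₁ : t₁ ≤ t₂ := by
      have := le_max_left 0 ((h t₁ + M + 1) / c); rw [ht₂_def]; linarith
    have hrate : ∀ u ∈ Set.Icc t₁ t₂, lam ^ 2 + eps u - h u ^ 2 ≤ -c := by
      intro u hu
      have hle : h u ≤ -lam - d / 2 := hstay1 u hu.1
      have he := hepsT u (ht₁.trans hu.1)
      nlinarith [he.2, mul_nonneg (by linarith : (0:ℝ) ≤ (lam + d/2) - h u)
        (by linarith : (0:ℝ) ≤ -((lam + d/2) + h u))]
    have hlin := lin_le ht₂t₁ (fun u hu => hD t₁ (hT₀1.trans ht₁) u hu.1) hrate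
    have ht₂M : h t₂ ≤ -M := by
      rcases le_or_gt ((h t₁ + M + 1) / c) 0 with hle | hlt
      · have h1 : h t₁ + M + 1 ≤ 0 := by
          by_contra hh
          push_neg at hh
          exact absurd (div_pos hh hc0) (not_lt.mpr hle)
        have h2 : max 0 ((h t₁ + M + 1) / c) = 0 := max_eq_left hle
        rw [ht₂_def, h2] at hlin ⊢
        simp at hlin ⊢
        linarith
      · have h2 : max 0 ((h t₁ + M + 1) / c) = (h t₁ + M + 1) / c := max_eq_right hlt.le
        have h3 : c * ((h t₁ + M + 1) / c) = h t₁ + M + 1 := by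
          field_simp
        rw [ht₂_def, h2] at hlin ⊢
        simp only [add_sub_cancel_left] at hlin
        rw [h3] at hlin
        linarith
    -- barrier at -M
    have hMpos : 0 < M := by rw [hM_def]; linarith
    have hstay2 : ∀ u ∈ Set.Ici t₂, h u ≤ -M := by
      refine barrier_le (hD t₂ (hT₀1.trans (ht₁.trans ht₂t₁))) ?_ ht₂M
      intro u hu hua
      have he := hepsT u (ht₁.trans (ht₂t₁.trans hu))
      rw [hua, hM_def]
      nlinarith [he.2, hlam, hd0, hdlam]
    -- blow-up via -1/h
    set t₃ : ℝ := t₂ + 2 * (-(h t₂)⁻¹) + 2 with ht₃_def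
    have hφ2 : 0 < -(h t₂)⁻¹ := by
      have : h t₂ < 0 := lt_of_le_of_lt ht₂M (by linarith)
      have := inv_lt_zero.mpr this
      linarith
    have ht₃t₂ : t₂ ≤ t₃ := by rw [ht₃_def]; linarith
    have hφd : ∀ u ∈ Set.Icc t₂ t₃,
        HasDerivAt (fun y => -(h y)⁻¹) ((lam ^ 2 + eps u - h u ^ 2) / h u ^ 2) u := by
      intro u hu
      have hne : h u ≠ 0 := by
        have := hstay2 u hu.1; intro hz; rw [hz] at this; linarith
      have hre : (lam ^ 2 + eps u - h u ^ 2) / h u ^ 2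
          = -(-(lam ^ 2 + eps u - h u ^ 2) / h u ^ 2) := by ring
      rw [hre]
      exact ((hD t₂ (hT₀1.trans (ht₁.trans ht₂t₁)) u hu.1).inv hne).neg
    have hφb : ∀ u ∈ Set.Icc t₂ t₃, (lam ^ 2 + eps u - h u ^ 2) / h u ^ 2 ≤ -(1/2 : ℝ) := by
      intro u hu
      have hle : h u ≤ -M := hstay2 u hu.1
      have he := hepsT u (ht₁.trans (ht₂t₁.trans hu.1))
      have hsq : M ^ 2 ≤ h u ^ 2 := by
        nlinarith [mul_nonneg (by linarith : (0:ℝ) ≤ M - h u) (by linarith : (0:ℝ) ≤ -(M + h u))]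
      have hpos : 0 < h u ^ 2 := by nlinarith
      have hnum : lam ^ 2 + eps u - h u ^ 2 ≤ -(h u ^ 2) / 2 := by
        rw [hM_def] at hsq
        nlinarith [he.2]
      calc (lam ^ 2 + eps u - h u ^ 2) / h u ^ 2 ≤ (-(h u ^ 2) / 2) / h u ^ 2 :=
            (div_le_div_iff_of_pos_right hpos).mpr hnum
        _ = -(1/2 : ℝ) := by rw [div_right_comm, neg_div, div_self hpos.ne']; ring
    have hφlin := lin_le ht₃t₂ hφd hφb
    have hφ3 : 0 < -(h t₃)⁻¹ := by
      have : h t₃ < 0 := lt_of_le_of_lt (hstay2 t₃ ht₃t₂) (by linarith)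
      have := inv_lt_zero.mpr this
      linarith
    have ht₃sub : t₃ - t₂ = 2 * (-(h t₂)⁻¹) + 2 := by rw [ht₃_def]; ring
    rw [ht₃sub] at hφlin
    linarith
  -- key arithmetic for boundary at ±(lam - d)
  have hbmid : ∀ s, T₀ ≤ s → ∀ u ∈ Set.Ici s, ∀ a : ℝ, a ^ 2 = (lam - d) ^ 2 →
      h u = a → 0 < lam ^ 2 + eps u - h u ^ 2 := by
    intro s hs u hu a ha hua
    have he := hepsT u (hs.trans hu)
    rw [hua, ha]
    nlinarith [he.1]
  by_cases hC : ∃ s, T₀ ≤ s ∧ -lam + d ≤ h s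
  · obtain ⟨s₀, hs₀T, hs₀⟩ := hC
    have hstayA : ∀ u ∈ Set.Ici s₀, -lam + d ≤ h u := by
      refine barrier_ge (hD s₀ (hT₀1.trans hs₀T)) ?_ hs₀
      intro u hu hua
      exact hbmid s₀ hs₀T u hu _ (by ring) hua
    by_cases hC2 : ∃ s, s₀ ≤ s ∧ lam - d ≤ h s
    · obtain ⟨s₁, hs₁s₀, hs₁⟩ := hC2
      have hs₁T : T₀ ≤ s₁ := hs₀T.trans hs₁s₀
      have hstayB : ∀ u ∈ Set.Ici s₁, lam - d ≤ h u := by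
        refine barrier_ge (hD s₁ (hT₀1.trans hs₁T)) ?_ hs₁
        intro u hu hua
        exact hbmid s₁ hs₁T u hu _ (by ring) hua
      by_cases hC3 : ∃ s, s₁ ≤ s ∧ h s ≤ lam + d
      · obtain ⟨s₂, hs₂s₁, hs₂⟩ := hC3
        have hs₂T : T₀ ≤ s₂ := hs₁T.trans hs₂s₁
        have hstayC : ∀ u ∈ Set.Ici s₂, h u ≤ lam + d := by
          refine barrier_le (hD s₂ (hT₀1.trans hs₂T)) ?_ hs₂
          intro u hu hua
          have he := hepsT u (hs₂T.trans hu)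
          rw [hua]
          nlinarith [he.2]
        refine ⟨s₂, by linarith, fun t htT => Or.inl ?_⟩
        have h1 : lam - d ≤ h t := hstayB t (Set.mem_Ici.mpr (by linarith))
        have h2 : h t ≤ lam + d := hstayC t (Set.mem_Ici.mpr htT.le)
        rw [abs_lt]
        constructor <;> linarith
      · -- stuck above lam + d forever: contradiction
        exfalso
        push_neg at hC3
        set t' : ℝ := s₁ + (h s₁ - lam + 1) / c with ht'_def
        have hhs₁ : lam + d < h s₁ := hC3 s₁ (le_refl s₁)
        have ht's₁ : s₁ ≤ t' := by
          have : 0 < (h s₁ - lam + 1) / c := div_pos (by linarith) hc0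
          rw [ht'_def]; linarith
        have hrate : ∀ u ∈ Set.Icc s₁ t', lam ^ 2 + eps u - h u ^ 2 ≤ -c := by
          intro u hu
          have hgt : lam + d < h u := hC3 u hu.1
          have he := hepsT u (hs₁T.trans hu.1)
          nlinarith [he.2, mul_nonneg (by linarith : (0:ℝ) ≤ h u - (lam + d))
            (by linarith : (0:ℝ) ≤ h u + (lam + d))]
        have hlin := lin_le ht's₁ (fun u hu => hD s₁ (hT₀1.trans hs₁T) u hu.1) hrate
        rw [ht'_def] at hlin
        simp only [add_sub_cancel_left] at hlin
        rw [mul_div_cancel₀ _ (ne_of_gt hc0)] at hlin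
        have := hC3 t' ht's₁
        linarith
    · -- stuck in middle forever: contradiction
      exfalso
      push_neg at hC2
      set t' : ℝ := s₀ + (lam - h s₀ + 1) / c with ht'_def
      have hhs₀ : h s₀ < lam - d := hC2 s₀ (le_refl s₀)
      have ht's₀ : s₀ ≤ t' := by
        have : 0 < (lam - h s₀ + 1) / c := div_pos (by linarith) hc0
        rw [ht'_def]; linarith
      have hrate : ∀ u ∈ Set.Icc s₀ t', c ≤ lam ^ 2 + eps u - h u ^ 2 := by
        intro u hu
        have hlo : -lam + d ≤ h u := hstayA u hu.1
        have hhi : h u < lam - d := hC2 u hu.1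
        have he := hepsT u (hs₀T.trans hu.1)
        nlinarith [he.1, mul_nonneg (by linarith : (0:ℝ) ≤ (lam - d) - h u)
          (by linarith : (0:ℝ) ≤ (lam - d) + h u)]
      have hlin := lin_ge ht's₀ (fun u hu => hD s₀ (hT₀1.trans hs₀T) u hu.1) hrate
      rw [ht'_def] at hlin
      simp only [add_sub_cancel_left] at hlin
      rw [mul_div_cancel₀ _ (ne_of_gt hc0)] at hlin
      have := hC2 t' ht's₀
      linarith
  · -- h < -lam + d forever after T₀
    push_neg at hC
    refine ⟨T₀, by linarith, fun t htT => Or.inr ?_⟩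
    have h1 : h t < -lam + d := hC t htT.le
    have h2 : -lam - d / 2 < h t := step1 t htT.le
    rw [abs_lt]
    constructor <;> linarith
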